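/- arXiv:2007.06564 — 5 statements merged into one kernel-verified Lean document; each statement's English description precedes it below -/
import Mathlib

section
/- For every density matrix ρ and all α, β ∈ ZMod d, the displaced matrix D(α,β)ᴴ ρ D(α,β) is a density matrix and satisfies G_X(D(α,β)ᴴ ρ D(α,β)) = G_X(ρ) and G_P(D(α,β)ᴴ ρ D(α,β)) = G_P(ρ); in particular G_XP(D(α,β)ᴴ ρ D(α,β)) = G_XP(ρ). -/
open Matrix
open scoped ComplexOrder

noncomputable section

/-- The Lorenz values of `p : Fin d → ℝ`, computed with the sorting permutation `Tuple.sort p`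
(they are independent of the choice of sorting permutation):
`L(p, ℓ) = ∑_{k=0}^{ℓ} p (π k)` where `π` arranges the values of `p` in ascending order. -/
def lorenzF {d : ℕ} (p : Fin d → ℝ) (ℓ : Fin d) : ℝ :=
  ∑ k ∈ Finset.Iic ℓ, p (Tuple.sort p k)

/-- The Gini index of `p : Fin d → ℝ`: `G(p) = 1 − (2/(d+1)) · ∑_{ℓ=0}^{d−1} L(p, ℓ)`. -/
def giniF {d : ℕ} (p : Fin d → ℝ) : ℝ :=
  1 - (2 / ((d : ℝ) + 1)) * ∑ ℓ : Fin d, lorenzF p ℓ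

/-- The Gini index of a function `p : ZMod d → ℝ`, obtained by reindexing along the
bijection `Fin d → ZMod d`, `k ↦ (k : ZMod d)`. -/
def gini {d : ℕ} [NeZero d] (p : ZMod d → ℝ) : ℝ :=
  giniF (fun k : Fin d => p ((k : ℕ) : ZMod d))

/-- A density matrix: positive semidefinite with trace 1. -/
def IsDensityMatrix {d : ℕ} [NeZero d] (ρ : Matrix (ZMod d) (ZMod d) ℂ) : Prop :=
  ρ.PosSemidef ∧ ρ.trace = 1

/-- The position distribution of `ρ`: `P_X(ρ) r = Re(ρ r r)`. -/
def PX {d : ℕ} [NeZero d] (ρ : Matrix (ZMod d) (ZMod d) ℂ) : ZMod d → ℝ :=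
  fun r => (ρ r r).re

/-- `ω = exp(2πi/d)`. -/
def omega (d : ℕ) : ℂ := Complex.exp (2 * Real.pi * Complex.I / d)

/-- The Fourier matrix `F r s = ω^{(r·s).val} / √d`. -/
def Fmat (d : ℕ) [NeZero d] : Matrix (ZMod d) (ZMod d) ℂ :=
  Matrix.of fun r s : ZMod d => omega d ^ (r * s).val / (Real.sqrt d : ℂ)

/-- The momentum distribution of `ρ`: `P_P(ρ) r = Re((Fᴴ ρ F) r r)`. -/
def PP {d : ℕ} [NeZero d] (ρ : Matrix (ZMod d) (ZMod d) ℂ) : ZMod d → ℝ :=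
  fun r => (((Fmat d)ᴴ * ρ * Fmat d) r r).re

/-- `G_X(ρ) = G(P_X(ρ))`. -/
def GX {d : ℕ} [NeZero d] (ρ : Matrix (ZMod d) (ZMod d) ℂ) : ℝ := gini (PX ρ)

/-- `G_P(ρ) = G(P_P(ρ))`. -/
def GP {d : ℕ} [NeZero d] (ρ : Matrix (ZMod d) (ZMod d) ℂ) : ℝ := gini (PP ρ)

/-- `G_XP(ρ) = G_X(ρ) + G_P(ρ)`. -/
def GXP {d : ℕ} [NeZero d] (ρ : Matrix (ZMod d) (ZMod d) ℂ) : ℝ := GX ρ + GP ρ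


/-- `Z(α) m n = ω^{(α·m).val}` if `m = n`, else `0`. -/
def Zmat (d : ℕ) [NeZero d] (α : ZMod d) : Matrix (ZMod d) (ZMod d) ℂ :=
  Matrix.of fun m n : ZMod d => if m = n then omega d ^ (α * m).val else 0

/-- `X(β) m n = 1` if `m = n + β`, else `0`. -/
def Xmat (d : ℕ) [NeZero d] (β : ZMod d) : Matrix (ZMod d) (ZMod d) ℂ :=
  Matrix.of fun m n : ZMod d => if m = n + β then 1 else 0

/-- The displacement operator `D(α,β) = ω^{((−2⁻¹)·α·β).val} · Z(α) · X(β)`,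
where `2⁻¹` is the inverse of `2` in `ZMod d`. -/
def Dmat (d : ℕ) [NeZero d] (α β : ZMod d) : Matrix (ZMod d) (ZMod d) ℂ :=
  omega d ^ ((-(2 : ZMod d)⁻¹ * α * β).val) • (Zmat d α * Xmat d β)

end

noncomputable section Aux

variable {d : ℕ} [NeZero d]

lemma norm_omega : ‖omega d‖ = 1 := by
  rw [omega, Complex.norm_exp]
  have : (2 * (Real.pi : ℂ) * Complex.I / (d : ℂ)).re = 0 := by
    have : (2 * (Real.pi : ℂ) * Complex.I / (d : ℂ)) =
        ((2 * Real.pi / d : ℝ) : ℂ) * Complex.I := by push_cast; ring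
    rw [this]
    simp
  rw [this, Real.exp_zero]

lemma conj_omega_pow_mul_self (k : ℕ) :
    (starRingEnd ℂ) (omega d ^ k) * omega d ^ k = 1 := by
  rw [Complex.conj_mul', norm_pow, norm_omega, one_pow]
  norm_num

lemma omega_pow_d : omega d ^ d = 1 := by
  have hd : (d : ℂ) ≠ 0 := Nat.cast_ne_zero.mpr (NeZero.ne d)
  rw [omega, ← Complex.exp_nat_mul, mul_comm, div_mul_cancel₀ _ hd,
    Complex.exp_two_pi_mul_I]

lemma omega_pow_mod (n : ℕ) : omega d ^ (n % d) = omega d ^ n := by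
  conv_rhs => rw [← Nat.div_add_mod n d]
  rw [pow_add, pow_mul, omega_pow_d, one_pow, one_mul]

lemma chi_add (x y : ZMod d) :
    omega d ^ (x + y).val = omega d ^ x.val * omega d ^ y.val := by
  rw [← pow_add, ZMod.val_add, omega_pow_mod]

/-- Key diagonal lemma for generalized-permutation (shift+phase) matrices. -/
lemma shift_diag (A N : Matrix (ZMod d) (ZMod d) ℂ) (u : ZMod d → ℂ)
    (hu : ∀ r, star (u r) * u r = 1) (σ : ZMod d)
    (hN : ∀ m n, N m n = if m = n + σ then u n else 0) (r : ZMod d) :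
    (Nᴴ * A * N) r r = A (r + σ) (r + σ) := by
  rw [Matrix.mul_apply]
  have h1 : ∀ t, (Nᴴ * A) r t = star (u r) * A (r + σ) t := by
    intro t
    rw [Matrix.mul_apply]
    rw [Finset.sum_eq_single (r + σ)]
    · rw [Matrix.conjTranspose_apply, hN, if_pos rfl]
    · intro s _ hs
      rw [Matrix.conjTranspose_apply, hN, if_neg hs, star_zero, zero_mul]
    · simp
  rw [Finset.sum_eq_single (r + σ)]
  · rw [h1, hN, if_pos rfl, mul_right_comm, hu, one_mul]
  · intro t _ ht
    rw [hN, if_neg ht, mul_zero]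
  · simp

lemma shift_unitary (N : Matrix (ZMod d) (ZMod d) ℂ) (u : ZMod d → ℂ)
    (hu : ∀ r, star (u r) * u r = 1) (σ : ZMod d)
    (hN : ∀ m n, N m n = if m = n + σ then u n else 0) :
    Nᴴ * N = 1 := by
  ext m n
  rw [Matrix.mul_apply, Finset.sum_eq_single (n + σ)]
  · rw [Matrix.conjTranspose_apply, hN, hN, if_pos rfl, Matrix.one_apply]
    by_cases h : m = n
    · subst h; rw [if_pos rfl, if_pos rfl, hu]
    · rw [if_neg (by simpa using (Ne.symm h)), if_neg h, star_zero, zero_mul]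
  · intro s _ hs
    rw [Matrix.conjTranspose_apply, hN (m := s) (n := n), if_neg hs, mul_zero]
  · simp

lemma Dmat_apply (α β m n : ZMod d) :
    Dmat d α β m n = if m = n + β then
      omega d ^ ((-(2 : ZMod d)⁻¹ * α * β).val) * omega d ^ ((α * m).val) else 0 := by
  have hZX : (Zmat d α * Xmat d β) m n =
      if m = n + β then omega d ^ ((α * m).val) else 0 := by
    rw [Matrix.mul_apply, Finset.sum_eq_single m]
    · simp [Zmat, Xmat]
    · intro s _ hs
      simp [Zmat, Xmat, Ne.symm hs]
    · simp
  rw [Dmat, Matrix.smul_apply, hZX, smul_eq_mul, mul_ite, mul_zero]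

/-- `D` has the shift+phase shape. -/
lemma Dmat_shape (α β : ZMod d) (m n : ZMod d) :
    Dmat d α β m n = if m = n + β then
      omega d ^ ((-(2 : ZMod d)⁻¹ * α * β).val) * omega d ^ ((α * (n + β)).val) else 0 := by
  rw [Dmat_apply]
  by_cases h : m = n + β
  · rw [if_pos h, if_pos h, h]
  · rw [if_neg h, if_neg h]

lemma conj_prod_omega (a b : ℕ) :
    star (omega d ^ a * omega d ^ b) * (omega d ^ a * omega d ^ b) = 1 := by
  rw [← pow_add]
  exact conj_omega_pow_mul_self _

/-- `D F = F N` where `N` is the momentum-side shift+phase matrix. -/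
lemma DF_eq (α β : ZMod d) :
    Dmat d α β * Fmat d = Fmat d *
      (Matrix.of fun m n : ZMod d => if m = n + α then
        omega d ^ ((-(2 : ZMod d)⁻¹ * α * β).val) * omega d ^ ((-(β * n)).val) else 0) := by
  have combine : ∀ x y : ZMod d, omega d ^ x.val * omega d ^ y.val = omega d ^ (x + y).val :=
    fun x y => (chi_add x y).symm
  ext m r
  rw [Matrix.mul_apply, Matrix.mul_apply]
  rw [Finset.sum_eq_single (m - β), Finset.sum_eq_single (r + α)]
  · rw [Dmat_apply, if_pos (by ring), Matrix.of_apply, if_pos rfl]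
    simp only [Fmat, Matrix.of_apply]
    have key : omega d ^ ((-(2 : ZMod d)⁻¹ * α * β).val) * omega d ^ ((α * m).val)
          * omega d ^ (((m - β) * r).val)
        = omega d ^ ((m * (r + α)).val)
          * (omega d ^ ((-(2 : ZMod d)⁻¹ * α * β).val) * omega d ^ ((-(β * r)).val)) := by
      rw [combine, combine, combine, combine]
      congr 1
      ring
    rw [div_eq_mul_inv, div_eq_mul_inv]
    calc omega d ^ ((-(2 : ZMod d)⁻¹ * α * β).val) * omega d ^ ((α * m).val)
          * (omega d ^ (((m - β) * r).val) * ((Real.sqrt d : ℂ))⁻¹)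
        = (omega d ^ ((-(2 : ZMod d)⁻¹ * α * β).val) * omega d ^ ((α * m).val)
          * omega d ^ (((m - β) * r).val)) * ((Real.sqrt d : ℂ))⁻¹ := by ring
      _ = (omega d ^ ((m * (r + α)).val)
          * (omega d ^ ((-(2 : ZMod d)⁻¹ * α * β).val) * omega d ^ ((-(β * r)).val)))
          * ((Real.sqrt d : ℂ))⁻¹ := by rw [key]
      _ = omega d ^ ((m * (r + α)).val) * ((Real.sqrt d : ℂ))⁻¹
          * (omega d ^ ((-(2 : ZMod d)⁻¹ * α * β).val) * omega d ^ ((-(β * r)).val)) := by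
          ring
  · intro s _ hs
    rw [Matrix.of_apply, if_neg hs, mul_zero]
  · simp
  · intro s _ hs
    rw [Dmat_apply, if_neg (fun h => hs (by rw [h]; ring)), zero_mul]
  · simp

theorem lorenzF_comp_perm {n : ℕ} (p : Fin n → ℝ) (e : Equiv.Perm (Fin n)) (ℓ : Fin n) :
    lorenzF (p ∘ e) ℓ = lorenzF p ℓ := by
  set τ : Equiv.Perm (Fin n) := e * Tuple.sort (p ∘ e) with hτ
  have hco : p ∘ τ = (p ∘ e) ∘ Tuple.sort (p ∘ e) := by
    rw [hτ]; ext k; simp [Equiv.Perm.mul_apply]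
  have hmono : Monotone (p ∘ τ) := by
    rw [hco]; exact Tuple.monotone_sort (p ∘ e)
  have hkey : p ∘ τ = p ∘ Tuple.sort p :=
    Tuple.comp_sort_eq_comp_iff_monotone.mpr hmono
  unfold lorenzF
  refine Finset.sum_congr rfl fun k _ => ?_
  calc (p ∘ e) (Tuple.sort (p ∘ e) k) = (p ∘ τ) k := by simp [hτ, Equiv.Perm.mul_apply]
    _ = (p ∘ Tuple.sort p) k := by rw [hkey]
    _ = p (Tuple.sort p k) := rfl

theorem giniF_comp_perm {n : ℕ} (p : Fin n → ℝ) (e : Equiv.Perm (Fin n)) :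
    giniF (p ∘ e) = giniF p := by
  unfold giniF
  congr 1
  congr 1
  exact Finset.sum_congr rfl fun ℓ _ => lorenzF_comp_perm p e ℓ

def finZMod (d : ℕ) [NeZero d] : Fin d ≃ ZMod d where
  toFun k := ((k : ℕ) : ZMod d)
  invFun z := ⟨z.val, z.val_lt⟩
  left_inv k := Fin.ext (ZMod.val_cast_of_lt k.isLt)
  right_inv z := ZMod.natCast_rightInverse z

lemma gini_comp_add (p : ZMod d → ℝ) (σ : ZMod d) :
    gini (fun z => p (z + σ)) = gini p := by
  unfold gini
  have h : (fun k : Fin d => p (((k : ℕ) : ZMod d) + σ)) =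
      (fun k : Fin d => p ((k : ℕ) : ZMod d)) ∘
        ((finZMod d).trans ((Equiv.addRight σ).trans (finZMod d).symm)) := by
    funext k
    show p (((k : ℕ) : ZMod d) + σ)
      = p (((((finZMod d).symm ((finZMod d) k + σ) : Fin d) : ℕ)) : ZMod d)
    rw [show ((((finZMod d).symm ((finZMod d) k + σ) : Fin d) : ℕ) : ZMod d)
      = (finZMod d) ((finZMod d).symm ((finZMod d) k + σ)) from rfl,
      Equiv.apply_symm_apply]
    rfl
  rw [h, giniF_comp_perm]

end Aux


theorem GXP_displacement_invariant {d : ℕ} [NeZero d] (hd : 2 ≤ d) (hodd : Odd d)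
    (ρ : Matrix (ZMod d) (ZMod d) ℂ) (hρ : IsDensityMatrix ρ) (α β : ZMod d) :
    IsDensityMatrix ((Dmat d α β)ᴴ * ρ * Dmat d α β) ∧
    GX ((Dmat d α β)ᴴ * ρ * Dmat d α β) = GX ρ ∧
    GP ((Dmat d α β)ᴴ * ρ * Dmat d α β) = GP ρ ∧
    GXP ((Dmat d α β)ᴴ * ρ * Dmat d α β) = GXP ρ := by
  set c : ℂ := omega d ^ ((-(2 : ZMod d)⁻¹ * α * β).val) with hc
  set uD : ZMod d → ℂ := fun n => c * omega d ^ ((α * (n + β)).val) with huD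
  have huD1 : ∀ r, star (uD r) * uD r = 1 := fun r => conj_prod_omega _ _
  have hDshape : ∀ m n, Dmat d α β m n = if m = n + β then uD n else 0 :=
    fun m n => Dmat_shape α β m n
  have hDunit : (Dmat d α β)ᴴ * Dmat d α β = 1 :=
    shift_unitary _ uD huD1 β hDshape
  set N : Matrix (ZMod d) (ZMod d) ℂ :=
    Matrix.of fun m n : ZMod d => if m = n + α then c * omega d ^ ((-(β * n)).val) else 0
    with hNdef
  set uN : ZMod d → ℂ := fun n => c * omega d ^ ((-(β * n)).val) with huN
  have huN1 : ∀ r, star (uN r) * uN r = 1 := fun r => conj_prod_omega _ _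
  have hNshape : ∀ m n, N m n = if m = n + α then uN n else 0 := fun m n => rfl
  have hDF : Dmat d α β * Fmat d = Fmat d * N := DF_eq α β
  -- density matrix
  have hdens : IsDensityMatrix ((Dmat d α β)ᴴ * ρ * Dmat d α β) := by
    refine ⟨hρ.1.conjTranspose_mul_mul_same _, ?_⟩
    have hDD : Dmat d α β * (Dmat d α β)ᴴ = 1 := mul_eq_one_comm.mp hDunit
    calc ((Dmat d α β)ᴴ * ρ * Dmat d α β).trace
        = (Dmat d α β * ((Dmat d α β)ᴴ * ρ)).trace := Matrix.trace_mul_comm _ _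
      _ = (Dmat d α β * (Dmat d α β)ᴴ * ρ).trace := by rw [Matrix.mul_assoc]
      _ = ρ.trace := by rw [hDD, Matrix.one_mul]
      _ = 1 := hρ.2
  -- position
  have hPX : PX ((Dmat d α β)ᴴ * ρ * Dmat d α β) = fun r => PX ρ (r + β) := by
    funext r
    unfold PX
    rw [shift_diag ρ _ uD huD1 β hDshape r]
  have hGX : GX ((Dmat d α β)ᴴ * ρ * Dmat d α β) = GX ρ := by
    unfold GX
    rw [hPX, gini_comp_add]
  -- momentum
  have hmom : (Fmat d)ᴴ * ((Dmat d α β)ᴴ * ρ * Dmat d α β) * Fmat d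
      = Nᴴ * ((Fmat d)ᴴ * ρ * Fmat d) * N := by
    have : (Fmat d)ᴴ * ((Dmat d α β)ᴴ * ρ * Dmat d α β) * Fmat d
        = (Dmat d α β * Fmat d)ᴴ * ρ * (Dmat d α β * Fmat d) := by
      rw [Matrix.conjTranspose_mul]
      simp only [Matrix.mul_assoc]
    rw [this, hDF, Matrix.conjTranspose_mul]
    simp only [Matrix.mul_assoc]
  have hPP : PP ((Dmat d α β)ᴴ * ρ * Dmat d α β) = fun r => PP ρ (r + α) := by
    funext r
    unfold PP
    rw [hmom, shift_diag _ _ uN huN1 α hNshape r]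
  have hGP : GP ((Dmat d α β)ᴴ * ρ * Dmat d α β) = GP ρ := by
    unfold GP
    rw [hPP, gini_comp_add]
  exact ⟨hdens, hGX, hGP, by unfold GXP; rw [hGX, hGP]⟩
end

section
/- All coherent states have the same value of G_XP as the fiducial vector: for every unit vector f : ZMod d → ℂ (with ∑ r, |f r|² = 1), every α, β ∈ ZMod d, and the rank-one projections (ρ_f) r s = f r · conj(f s) and ρ_{α,β} = D(α,β) ρ_f D(α,β)ᴴ, one has G_XP(ρ_{α,β}) = G_XP(ρ_f). -/
open Matrix
open scoped ComplexOrder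

/- ### Auxiliary material -/

noncomputable section Aux

namespace GXPAux

variable {d : ℕ} [NeZero d]

lemma omega_pow_d : omega d ^ d = 1 := by
  rw [omega, ← Complex.exp_nat_mul, mul_div_cancel₀]
  · exact Complex.exp_two_pi_mul_I
  · exact_mod_cast (NeZero.ne d)

lemma omega_pow_mod (n : ℕ) : omega d ^ (n % d) = omega d ^ n := by
  conv_rhs => rw [← Nat.div_add_mod n d]
  rw [pow_add, pow_mul, omega_pow_d, one_pow, one_mul]

/-- The character `x ↦ ω^{x.val}`. -/
def chi (d : ℕ) [NeZero d] (x : ZMod d) : ℂ := omega d ^ x.val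

lemma chi_add (x y : ZMod d) : chi d (x + y) = chi d x * chi d y := by
  rw [chi, chi, chi, ZMod.val_add, omega_pow_mod, pow_add]

lemma chi_zero : chi d 0 = 1 := by simp [chi]

lemma chi_mul_conj (x : ZMod d) : chi d x * (starRingEnd ℂ) (chi d x) = 1 := by
  rw [Complex.mul_conj]
  norm_cast
  rw [chi, map_pow]
  have : omega d = Complex.exp (((2 * Real.pi / d : ℝ) : ℂ) * Complex.I) := by
    rw [omega]; push_cast; ring_nf
  rw [this, Complex.normSq_eq_norm_sq, Complex.norm_exp_ofReal_mul_I]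
  simp

lemma chi_ne_zero (x : ZMod d) : chi d x ≠ 0 := by
  intro h
  have := chi_mul_conj x
  rw [h] at this; simp at this

lemma conj_chi (x : ZMod d) : (starRingEnd ℂ) (chi d x) = chi d (-x) := by
  have h1 := chi_mul_conj x
  have h2 : chi d x * chi d (-x) = 1 := by rw [← chi_add]; simp [chi_zero]
  exact mul_left_cancel₀ (chi_ne_zero x) (h1.trans h2.symm)

lemma Fmat_apply (r s : ZMod d) : Fmat d r s = chi d (r * s) / (Real.sqrt d : ℂ) := rfl

lemma ZX_apply (α β m n : ZMod d) :
    (Zmat d α * Xmat d β) m n = if n = m - β then chi d (α * m) else 0 := by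
  rw [Matrix.mul_apply]
  simp only [Zmat, Xmat, Matrix.of_apply]
  rw [Finset.sum_eq_single m]
  · rw [if_pos rfl]
    by_cases h : m = n + β
    · rw [if_pos h, if_pos (by rw [h]; ring : n = m - β), mul_one]; rfl
    · rw [if_neg h, if_neg (fun hn : n = m - β => h (by rw [hn]; ring)), mul_zero]
  · intro b _ hb; rw [if_neg (fun h => hb h.symm), zero_mul]
  · simp

lemma MrhoM_apply (α β : ZMod d) (ρ : Matrix (ZMod d) (ZMod d) ℂ) (k l : ZMod d) :
    (Zmat d α * Xmat d β * ρ * (Zmat d α * Xmat d β)ᴴ) k l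
      = chi d (α * k) * ρ (k - β) (l - β) * (starRingEnd ℂ) (chi d (α * l)) := by
  rw [Matrix.mul_apply]
  rw [Finset.sum_eq_single (l - β)]
  · rw [Matrix.conjTranspose_apply, ZX_apply, if_pos rfl, Matrix.mul_apply,
      Finset.sum_eq_single (k - β)]
    · rw [ZX_apply, if_pos rfl]; rfl
    · intro b _ hb; rw [ZX_apply, if_neg hb, zero_mul]
    · simp
  · intro b _ hb
    rw [Matrix.conjTranspose_apply, ZX_apply, if_neg hb, star_zero, mul_zero]
  · simp

lemma PX_shift (α β : ZMod d) (ρ : Matrix (ZMod d) (ZMod d) ℂ) :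
    PX (Zmat d α * Xmat d β * ρ * (Zmat d α * Xmat d β)ᴴ) = fun r => PX ρ (r - β) := by
  funext r
  unfold PX
  rw [MrhoM_apply, mul_comm (chi d (α * r)), mul_assoc, chi_mul_conj, mul_one]

lemma FAF_apply (A : Matrix (ZMod d) (ZMod d) ℂ) (a b : ZMod d) :
    ((Fmat d)ᴴ * A * Fmat d) a b
      = ∑ k, ∑ l, (starRingEnd ℂ) (Fmat d k a) * (A k l * Fmat d l b) := by
  rw [Matrix.mul_apply]
  simp_rw [Matrix.mul_apply, Matrix.conjTranspose_apply, Finset.sum_mul, mul_assoc]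
  rw [Finset.sum_comm]
  rfl

lemma chi_key (a α β r s : ZMod d) :
    chi d (-(r * (a - α))) * chi d (s * (a - α))
      = chi d (-((r + β) * a)) *
        (chi d (α * (r + β)) * chi d (-(α * (s + β))) * chi d ((s + β) * a)) := by
  rw [← chi_add, ← chi_add, ← chi_add, ← chi_add]
  congr 1
  ring

lemma PP_shift (α β : ZMod d) (ρ : Matrix (ZMod d) (ZMod d) ℂ) :
    PP (Zmat d α * Xmat d β * ρ * (Zmat d α * Xmat d β)ᴴ) = fun a => PP ρ (a - α) := by
  funext a
  unfold PP
  congr 1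
  rw [FAF_apply, FAF_apply]
  refine (Fintype.sum_equiv (Equiv.addRight β) _ _ fun r => ?_).symm
  refine Fintype.sum_equiv (Equiv.addRight β) _ _ fun s => ?_
  simp only [Equiv.coe_addRight, MrhoM_apply, add_sub_cancel_right]
  simp only [Fmat_apply, map_div₀, _root_.map_mul, map_inv₀, conj_chi, Complex.conj_ofReal, div_eq_mul_inv]
  linear_combination (ρ r s * ((Real.sqrt d : ℝ) : ℂ)⁻¹ * ((Real.sqrt d : ℝ) : ℂ)⁻¹) *
    chi_key a α β r s

/-- `giniF` is invariant under permutations. -/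
lemma giniF_comp_perm {n : ℕ} (p : Fin n → ℝ) (σ : Equiv.Perm (Fin n)) :
    giniF (p ∘ σ) = giniF p := by
  unfold giniF lorenzF
  have h := Tuple.comp_perm_comp_sort_eq_comp_sort (σ := σ) (f := p)
  have e : ∑ ℓ : Fin n, ∑ k ∈ Finset.Iic ℓ, (p ∘ σ) (Tuple.sort (p ∘ σ) k)
      = ∑ ℓ : Fin n, ∑ k ∈ Finset.Iic ℓ, p (Tuple.sort p k) :=
    Finset.sum_congr rfl fun ℓ _ => Finset.sum_congr rfl fun k _ => congrFun h k
  rw [e]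

/-- The equivalence `Fin d ≃ ZMod d` given by the natural coercion. -/
def finZMod (d : ℕ) [NeZero d] : Fin d ≃ ZMod d where
  toFun k := ((k : ℕ) : ZMod d)
  invFun x := ⟨x.val, x.val_lt⟩
  left_inv k := by
    ext
    simp [ZMod.val_natCast, Nat.mod_eq_of_lt k.isLt]
  right_inv x := ZMod.natCast_rightInverse x

lemma gini_comp_sub {d : ℕ} [NeZero d] (p : ZMod d → ℝ) (β : ZMod d) :
    gini (fun r => p (r - β)) = gini p := by
  unfold gini
  set σ : Equiv.Perm (Fin d) :=
    (finZMod d).trans ((Equiv.subRight β).trans (finZMod d).symm) with hσ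
  have : (fun k : Fin d => p (((k : ℕ) : ZMod d) - β))
      = (fun k : Fin d => p ((k : ℕ) : ZMod d)) ∘ σ := by
    funext k
    simp only [Function.comp_apply, hσ, Equiv.trans_apply, Equiv.subRight_apply]
    congr 1
    have : ((((finZMod d).symm (finZMod d k - β) : Fin d) : ℕ) : ZMod d)
        = finZMod d ((finZMod d).symm (finZMod d k - β)) := rfl
    rw [this, Equiv.apply_symm_apply]
    rfl
  rw [this, giniF_comp_perm]

end GXPAux

end Aux


open GXPAux

/-- All coherent states have the same value of `G_XP` as the fiducial vector:
for every unit vector `f : ZMod d → ℂ` (with `∑ r, |f r|² = 1`), every `α, β ∈ ZMod d`, and the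
rank-one projections `(ρ_f) r s = f r · conj(f s)` and `ρ_{α,β} = D(α,β) ρ_f D(α,β)ᴴ`, one has
`G_XP(ρ_{α,β}) = G_XP(ρ_f)`. -/
theorem GXP_coherent_state {d : ℕ} [NeZero d] (hd : 2 ≤ d) (hodd : Odd d)
    (f : ZMod d → ℂ) (hf : ∑ r, ‖f r‖ ^ 2 = 1)
    (ρf : Matrix (ZMod d) (ZMod d) ℂ)
    (hρf : ∀ r s : ZMod d, ρf r s = f r * (starRingEnd ℂ) (f s))
    (α β : ZMod d) :
    GXP (Dmat d α β * ρf * (Dmat d α β)ᴴ) = GXP ρf := by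
  have hD : Dmat d α β * ρf * (Dmat d α β)ᴴ
      = Zmat d α * Xmat d β * ρf * (Zmat d α * Xmat d β)ᴴ := by
    unfold Dmat
    rw [Matrix.conjTranspose_smul, Matrix.smul_mul, Matrix.smul_mul, Matrix.mul_smul,
      smul_smul]
    have hc : (omega d ^ (-(2:ZMod d)⁻¹ * α * β).val : ℂ)
        * star (omega d ^ (-(2:ZMod d)⁻¹ * α * β).val : ℂ) = 1 :=
      chi_mul_conj (-(2:ZMod d)⁻¹ * α * β)
    rw [hc, one_smul]
  rw [hD]
  unfold GXP GX GP
  rw [PX_shift, PP_shift, gini_comp_sub, gini_comp_sub]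
end

section
/- A density matrix ρ satisfies G_X(ρ) = (d − 1)/(d + 1) if and only if there exists a ∈ ZMod d such that ρ is the projector onto the position state |X;a⟩, i.e. ρ r s = 1 if r = a and s = a, and ρ r s = 0 otherwise. -/
open Matrix
open scoped ComplexOrder

lemma sum_iic_swap {d : ℕ} (q : Fin d → ℝ) :
    ∑ ℓ : Fin d, ∑ k ∈ Finset.Iic ℓ, q k = ∑ k : Fin d, ((d : ℝ) - k.val) * q k := by
  have h1 : ∀ ℓ : Fin d, ∑ k ∈ Finset.Iic ℓ, q k
      = ∑ k : Fin d, if k ∈ Finset.Iic ℓ then q k else 0 := by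
    intro ℓ
    rw [Finset.sum_ite_mem, Finset.univ_inter]
  simp_rw [h1, Finset.mem_Iic]
  rw [Finset.sum_comm]
  refine Finset.sum_congr rfl fun k _ => ?_
  have h2 : ∑ ℓ : Fin d, (if k ≤ ℓ then q k else 0)
      = ∑ ℓ ∈ Finset.Ici k, q k := by
    simp_rw [← Finset.mem_Ici]
    rw [Finset.sum_ite_mem, Finset.univ_inter]
  rw [h2, Finset.sum_const, Fin.card_Ici, nsmul_eq_mul]
  have : (k : ℕ) ≤ d := k.isLt.le
  push_cast [Nat.cast_sub this]
  ring

lemma giniF_eq_max_iff {d : ℕ} (hd : 2 ≤ d) (p : Fin d → ℝ) (hp : ∀ k, 0 ≤ p k)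
    (hs : ∑ k, p k = 1) :
    giniF p = ((d:ℝ)-1)/((d:ℝ)+1) ↔ ∃ a : Fin d, ∀ j, p j = if j = a then 1 else 0 := by
  set σ := Tuple.sort p with hσ
  set q : Fin d → ℝ := fun k => p (σ k) with hq
  have hq0 : ∀ k, 0 ≤ q k := fun k => hp _
  have hqs : ∑ k, q k = 1 := by rw [hq]; rw [Equiv.sum_comp σ p]; exact hs
  have hmono : Monotone q := Tuple.monotone_sort p
  have hS : ∑ ℓ : Fin d, lorenzF p ℓ = ∑ k : Fin d, ((d : ℝ) - k.val) * q k := by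
    unfold lorenzF
    exact sum_iic_swap q
  have hd1 : (0:ℝ) < (d:ℝ) + 1 := by positivity
  have step1 : giniF p = ((d:ℝ)-1)/((d:ℝ)+1) ↔
      ∑ k : Fin d, ((d : ℝ) - k.val) * q k = 1 := by
    unfold giniF
    rw [hS]
    constructor
    · intro h
      field_simp at h
      linarith
    · intro h
      rw [h]
      field_simp
      ring
  have step2 : (∑ k : Fin d, ((d : ℝ) - k.val) * q k = 1) ↔
      ∑ k : Fin d, ((d : ℝ) - 1 - k.val) * q k = 0 := by
    have hsub : ∑ k : Fin d, ((d : ℝ) - 1 - k.val) * q k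
        = (∑ k : Fin d, ((d : ℝ) - k.val) * q k) - 1 := by
      conv_rhs => rw [← hqs]
      rw [← Finset.sum_sub_distrib]
      exact Finset.sum_congr rfl fun k _ => by ring
    rw [hsub]
    constructor <;> intro h <;> linarith
  have nonneg : ∀ k ∈ Finset.univ, 0 ≤ ((d : ℝ) - 1 - (k : Fin d).val) * q k := by
    intro k _
    apply mul_nonneg _ (hq0 k)
    have : (k.val : ℝ) + 1 ≤ d := by exact_mod_cast k.isLt
    linarith
  have step3 : (∑ k : Fin d, ((d : ℝ) - 1 - k.val) * q k = 0) ↔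
      ∀ k : Fin d, k.val < d - 1 → q k = 0 := by
    rw [Finset.sum_eq_zero_iff_of_nonneg nonneg]
    constructor
    · intro h k hk
      have := h k (Finset.mem_univ k)
      rcases mul_eq_zero.mp this with h' | h'
      · exfalso
        have hk' : (k.val : ℝ) < (d:ℝ) - 1 := by
          have : (k.val : ℕ) + 1 ≤ d - 1 := by omega
          have h2 : ((k.val : ℕ) : ℝ) + 1 ≤ ((d - 1 : ℕ) : ℝ) := by exact_mod_cast this
          have h3 : ((d - 1 : ℕ) : ℝ) = (d : ℝ) - 1 := by
            have : 1 ≤ d := by omega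
            push_cast [Nat.cast_sub this]
            ring
          linarith
        linarith
      · exact h'
    · intro h k _
      by_cases hk : k.val < d - 1
      · rw [h k hk, mul_zero]
      · have : k.val = d - 1 := by omega
        have : ((d : ℝ) - 1 - k.val) = 0 := by
          rw [this]
          have h1 : 1 ≤ d := by omega
          push_cast [Nat.cast_sub h1]
          ring
        rw [this, zero_mul]
  rw [step1, step2, step3]
  have hlast : d - 1 < d := by omega
  set last : Fin d := ⟨d - 1, hlast⟩ with hlastdef
  constructor
  · intro hz
    have hql : q last = 1 := by
      rw [← hqs]
      symm
      apply Finset.sum_eq_single last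
      · intro k _ hk
        apply hz
        have : k.val ≠ d - 1 := fun h => hk (Fin.ext h)
        omega
      · intro h
        exact absurd (Finset.mem_univ last) h
    refine ⟨σ last, fun j => ?_⟩
    by_cases hj : j = σ last
    · rw [if_pos hj, hj]
      exact hql
    · rw [if_neg hj]
      have h1 : p j = q (σ.symm j) := by rw [hq]; simp
      rw [h1]
      apply hz
      have hne : σ.symm j ≠ last := by
        intro h
        apply hj
        rw [← h]
        simp
      have : (σ.symm j).val ≠ d - 1 := fun h => hne (Fin.ext h)
      have := (σ.symm j).isLt
      omega
  · rintro ⟨a, ha⟩ k hk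
    by_contra h
    have hka : σ k = a := by
      by_contra h'
      exact h (by rw [hq]; simp only; rw [ha (σ k), if_neg h'])
    have hqk : q k = 1 := by rw [hq]; simp only; rw [hka, ha a, if_pos rfl]
    have hkle : k ≤ last := by
      rw [Fin.le_def]
      have := k.isLt
      simp only [hlastdef]
      omega
    have hql : q last = 0 := by
      rw [hq]; simp only
      rw [ha (σ last), if_neg]
      intro h'
      have : last = k := σ.injective (h'.trans hka.symm)
      have hv : last.val = k.val := congrArg Fin.val this
      simp only [hlastdef] at hv
      omega
    have := hmono hkle
    rw [hqk, hql] at this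
    linarith

lemma zmod_equiv_aux (d : ℕ) [NeZero d] : ∃ e : Fin d ≃ ZMod d, ∀ k, e k = ((k : ℕ) : ZMod d) := by
  refine ⟨⟨fun k => ((k : ℕ) : ZMod d), fun a => ⟨a.val, ZMod.val_lt a⟩, ?_, ?_⟩, fun k => rfl⟩
  · intro k
    exact Fin.ext (ZMod.val_natCast_of_lt k.isLt)
  · intro a
    exact ZMod.natCast_rightInverse a

/-- A density matrix `ρ` satisfies `G_X(ρ) = (d − 1)/(d + 1)` if and only if there
exists `a ∈ ZMod d` such that `ρ` is the projector onto the position state `|X;a⟩`, i.e.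
`ρ r s = 1` if `r = a` and `s = a`, and `ρ r s = 0` otherwise. -/
theorem GX_eq_max_iff_position_state {d : ℕ} [NeZero d] (hd : 2 ≤ d)
    (ρ : Matrix (ZMod d) (ZMod d) ℂ) (hρ : IsDensityMatrix ρ) :
    GX ρ = ((d : ℝ) - 1) / ((d : ℝ) + 1) ↔
      ∃ a : ZMod d, ∀ r s : ZMod d, ρ r s = if r = a ∧ s = a then 1 else 0 := by
  classical
  obtain ⟨B, hB⟩ : ∃ B : Matrix (ZMod d) (ZMod d) ℂ, ρ = Bᴴ * B := by
    open scoped MatrixOrder in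
    obtain ⟨B, hB⟩ := CStarAlgebra.nonneg_iff_eq_star_mul_self.mp hρ.1.nonneg
    exact ⟨B, by rw [hB, Matrix.star_eq_conjTranspose]⟩
  have hentry : ∀ r s : ZMod d, ρ r s = ∑ i, (starRingEnd ℂ) (B i r) * B i s := by
    intro r s
    rw [hB, Matrix.mul_apply]
    exact Finset.sum_congr rfl fun i _ => by rw [Matrix.conjTranspose_apply]; rfl
  have hdiag : ∀ r : ZMod d, ρ r r = ((∑ i, Complex.normSq (B i r) : ℝ) : ℂ) := by
    intro r
    rw [hentry r r]
    push_cast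
    exact Finset.sum_congr rfl fun i _ => (Complex.normSq_eq_conj_mul_self (z := B i r)).symm
  have hPXeq : ∀ r : ZMod d, PX ρ r = ∑ i, Complex.normSq (B i r) := by
    intro r
    unfold PX
    rw [hdiag r, Complex.ofReal_re]
  have hPX0 : ∀ r, 0 ≤ PX ρ r := by
    intro r
    rw [hPXeq]
    exact Finset.sum_nonneg fun i _ => Complex.normSq_nonneg _
  have hdiag' : ∀ r : ZMod d, ρ r r = ((PX ρ r : ℝ) : ℂ) := by
    intro r
    rw [hdiag r, hPXeq r]
  have hPXsum : ∑ r : ZMod d, PX ρ r = 1 := by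
    have h := congrArg Complex.re hρ.2
    rw [Matrix.trace] at h
    simpa [Matrix.diag, Complex.re_sum, PX] using h
  have hcol : ∀ r : ZMod d, PX ρ r = 0 → ∀ i, B i r = 0 := by
    intro r hr i
    rw [hPXeq r] at hr
    have := (Finset.sum_eq_zero_iff_of_nonneg
      (fun i _ => Complex.normSq_nonneg (B i r))).mp hr i (Finset.mem_univ i)
    exact Complex.normSq_eq_zero.mp this
  obtain ⟨e, he⟩ := zmod_equiv_aux d
  have hGX : GX ρ = giniF (fun k : Fin d => PX ρ (e k)) := by
    unfold GX gini
    congr 1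
    funext k
    rw [he k]
  set pF : Fin d → ℝ := fun k : Fin d => PX ρ (e k) with hpF
  have hpF0 : ∀ k, 0 ≤ pF k := fun k => hPX0 _
  have hpFs : ∑ k, pF k = 1 := by
    rw [hpF]
    rw [Equiv.sum_comp e (PX ρ)]
    exact hPXsum
  rw [hGX]
  rw [giniF_eq_max_iff hd pF hpF0 hpFs]
  constructor
  · rintro ⟨aF, haF⟩
    refine ⟨e aF, fun r s => ?_⟩
    have hPXr : ∀ r : ZMod d, PX ρ r = if r = e aF then 1 else 0 := by
      intro r
      have h1 : PX ρ r = pF (e.symm r) := by rw [hpF]; simp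
      rw [h1, haF (e.symm r)]
      by_cases h : r = e aF
      · rw [if_pos h, if_pos (by rw [h]; simp)]
      · rw [if_neg h, if_neg (fun hc => h (by rw [← hc]; simp))]
    by_cases hr : r = e aF
    · by_cases hs : s = e aF
      · subst hr; subst hs
        rw [if_pos ⟨rfl, rfl⟩, hdiag' (e aF), hPXr (e aF), if_pos rfl]
        norm_num
      · rw [if_neg (fun h => hs h.2), hentry r s]
        apply Finset.sum_eq_zero
        intro i _
        rw [hcol s (by rw [hPXr s, if_neg hs]) i, mul_zero]
    · rw [if_neg (fun h => hr h.1), hentry r s]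
      apply Finset.sum_eq_zero
      intro i _
      rw [hcol r (by rw [hPXr r, if_neg hr]) i, map_zero, zero_mul]
  · rintro ⟨a, ha⟩
    refine ⟨e.symm a, fun j => ?_⟩
    have h1 : pF j = (if e j = a then 1 else 0 : ℝ) := by
      rw [hpF]
      simp only
      unfold PX
      rw [ha (e j) (e j)]
      by_cases h : e j = a
      · rw [if_pos h, if_pos ⟨h, h⟩, Complex.one_re]
      · rw [if_neg h, if_neg (fun hc => h hc.1), Complex.zero_re]
    rw [h1]
    by_cases h : e j = a
    · rw [if_pos h, if_pos (by rw [← h]; simp)]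
    · rw [if_neg h, if_neg (fun hc => h (by rw [hc]; simp))]
end

section
/- Let s : ZMod d → ℂ be the unit vector s r = ((if r = 0 then 1 else 0) + 1/√d) / √(2 + 2/√d), and let ρ_s be the rank-one projection (ρ_s) r s' = s r · conj(s s'). Then ρ_s is a density matrix with G_X(ρ_s) = G_P(ρ_s) = ((d − 1)/(d + 1)) · (2 + √d)/(2 + 2√d), and hence G_XP(ρ_s) = ((d − 1)/(d + 1)) · (1 + 1/(1 + √d)). In particular, the supremum of G_XP over all density matrices is at least ((d − 1)/(d + 1)) · (1 + 1/(1 + √d)). -/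
open Matrix
open scoped ComplexOrder

noncomputable section AuxLemmas

lemma omega_prim (d : ℕ) [NeZero d] : IsPrimitiveRoot (omega d) d :=
  Complex.isPrimitiveRoot_exp d (NeZero.ne d)

lemma sum_omega {d : ℕ} [NeZero d] (r : ZMod d) :
    ∑ t : ZMod d, omega d ^ (r * t).val = if r = 0 then (d : ℂ) else 0 := by
  have hprim := omega_prim d
  have hωd : omega d ^ d = 1 := hprim.pow_eq_one
  have key : ∀ t : ZMod d, omega d ^ (r * t).val = (omega d ^ r.val) ^ t.val := by
    intro t
    rw [← pow_mul, ZMod.val_mul, ← pow_eq_pow_mod _ hωd]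
  rw [Finset.sum_congr rfl fun t _ => key t]
  have hre : ∑ t : ZMod d, (omega d ^ r.val) ^ t.val
      = ∑ k ∈ Finset.range d, (omega d ^ r.val) ^ k := by
    rw [← Fin.sum_univ_eq_sum_range]
    exact (Fintype.sum_bijective (fun k : Fin d => ((k : ℕ) : ZMod d))
      ⟨fun x y hxy => by
          have := congrArg ZMod.val hxy
          rw [ZMod.val_natCast_of_lt x.isLt, ZMod.val_natCast_of_lt y.isLt] at this
          exact Fin.ext this,
        fun z => ⟨⟨z.val, z.val_lt⟩, by simp [ZMod.natCast_val]⟩⟩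
      _ _ (fun k => by rw [ZMod.val_natCast_of_lt k.isLt])).symm
  rw [hre]
  by_cases hr : r = 0
  · simp [hr, ZMod.val_zero]
  · have h1 : omega d ^ r.val ≠ 1 := by
      rw [Ne, hprim.pow_eq_one_iff_dvd]
      intro hdvd
      exact hr ((ZMod.val_eq_zero r).mp (Nat.eq_zero_of_dvd_of_lt hdvd r.val_lt))
    rw [geom_sum_eq h1, if_neg hr, ← pow_mul, mul_comm, pow_mul, hωd, one_pow, sub_self, zero_div]

lemma giniF_two {d : ℕ} [NeZero d] (hd : 2 ≤ d) {a b : ℝ} (hba : b < a)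
    (hnorm : a + ((d : ℝ) - 1) * b = 1) :
    giniF (fun k : Fin d => if k = 0 then a else b)
      = ((d : ℝ) - 1) / ((d : ℝ) + 1) * (1 - b * d) := by
  set q := fun k : Fin d => if k = 0 then a else b with hq
  set σ := Tuple.sort q with hσdef
  have hmono : Monotone (q ∘ σ) := Tuple.monotone_sort q
  have hval : ∀ m : Fin d, q m = a ∨ q m = b := by
    intro m; by_cases h : m = 0 <;> simp [hq, h]
  have hqa : ∀ m : Fin d, q m = a ↔ m = 0 := by
    intro m
    constructor
    · intro h; by_contra hm; simp [hq, hm] at h; exact absurd h (ne_of_lt hba)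
    · intro h; simp [hq, h]
  have hlast : ∀ k : Fin d, q (σ k) = if (k : ℕ) = d - 1 then a else b := by
    obtain ⟨k0, hk0⟩ := σ.surjective 0
    have hk0v : (k0 : ℕ) = d - 1 := by
      by_contra hne
      have hklt : k0 < (⟨d - 1, by omega⟩ : Fin d) := by
        rw [Fin.lt_def]
        show (k0 : ℕ) < d - 1
        have := k0.isLt; omega
      have h1 : a ≤ q (σ ⟨d - 1, by omega⟩) := by
        have := hmono hklt.le
        simpa [Function.comp, hk0, hqa, (hqa 0).mpr rfl] using this
      have h2 : q (σ ⟨d - 1, by omega⟩) = a := by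
        rcases hval (σ ⟨d - 1, by omega⟩) with h | h
        · exact h
        · exfalso; rw [h] at h1; exact absurd h1 (not_le.mpr hba)
      have := σ.injective (((hqa _).mp h2).trans hk0.symm)
      exact hne (by simpa using congrArg Fin.val this.symm)
    intro k
    by_cases hk : (k : ℕ) = d - 1
    · have : k = k0 := Fin.ext (by omega)
      rw [if_pos hk, this, hk0, (hqa 0).mpr rfl]
    · rw [if_neg hk]
      rcases hval (σ k) with h | h
      · exfalso
        have : σ k = 0 := (hqa _).mp h
        have : k = k0 := σ.injective (this.trans hk0.symm)
        omega
      · exact h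
  have hS : ∑ ℓ : Fin d, lorenzF q ℓ = b * ((d : ℝ) * ((d : ℝ) + 1) / 2) + (a - b) := by
    have h1 : ∑ ℓ : Fin d, lorenzF q ℓ
        = ∑ k : Fin d, ∑ _ℓ ∈ Finset.Ici k, q (σ k) := by
      unfold lorenzF
      exact Finset.sum_comm' (fun x y => by simp)
    rw [h1]
    have h2 : ∀ k : Fin d, ∑ _ℓ ∈ Finset.Ici k, q (σ k)
        = ((d : ℝ) - (k : ℕ)) * (if (k : ℕ) = d - 1 then a else b) := by
      intro k
      rw [Finset.sum_const, Fin.card_Ici, hlast k, nsmul_eq_mul,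
        Nat.cast_sub k.isLt.le]
    rw [Finset.sum_congr rfl fun k _ => h2 k]
    have h3 : ∀ k : Fin d, ((d : ℝ) - (k : ℕ)) * (if (k : ℕ) = d - 1 then a else b)
        = ((d : ℝ) - (k : ℕ)) * b + (if k = (⟨d - 1, by omega⟩ : Fin d) then ((d : ℝ) - (k : ℕ)) * (a - b) else 0) := by
      intro k
      by_cases hk : (k : ℕ) = d - 1
      · rw [if_pos hk, if_pos (Fin.ext hk)]; ring
      · rw [if_neg hk, if_neg (fun h => hk (by rw [h]))]; ring
    rw [Finset.sum_congr rfl fun k _ => h3 k, Finset.sum_add_distrib,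
      Finset.sum_ite_eq' Finset.univ]
    have h4 : ∑ k : Fin d, ((d : ℝ) - (k : ℕ)) * b
        = ((d : ℝ) * ((d : ℝ) + 1) / 2) * b := by
      rw [← Finset.sum_mul]
      congr 1
      have h5 : ∑ k : Fin d, ((d : ℝ) - (k : ℕ)) = (d : ℝ) * d - ∑ k : Fin d, ((k : ℕ) : ℝ) := by
        rw [Finset.sum_sub_distrib, Finset.sum_const, Finset.card_univ, Fintype.card_fin,
          nsmul_eq_mul]
      have h6 : ∑ k : Fin d, ((k : ℕ) : ℝ) = (d : ℝ) * ((d : ℝ) - 1) / 2 := by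
        rw [Fin.sum_univ_eq_sum_range (fun i => (i : ℝ)) d]
        have := Finset.sum_range_id_mul_two d
        have hcast : ((∑ i ∈ Finset.range d, i : ℕ) : ℝ) * 2 = (d : ℝ) * ((d : ℝ) - 1) := by
          rw [← Nat.cast_ofNat, ← Nat.cast_mul, this, Nat.cast_mul, Nat.cast_sub (by omega)]
          push_cast; ring
        push_cast at hcast ⊢
        linarith
      rw [h5, h6]; ring
    rw [h4]
    simp only [Finset.mem_univ, if_pos]
    have : ((((⟨d - 1, by omega⟩ : Fin d) : ℕ)) : ℝ) = (d : ℝ) - 1 := by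
      simp only []
      rw [Nat.cast_sub (by omega)]; norm_num
    rw [this]; ring
  unfold giniF
  rw [hS]
  have ha : a = 1 - ((d : ℝ) - 1) * b := by linarith
  have hd1 : (d : ℝ) + 1 ≠ 0 := by positivity
  rw [ha]; field_simp; ring

lemma gini_le_one {d : ℕ} [NeZero d] {p : ZMod d → ℝ} (hp : ∀ r, 0 ≤ p r) : gini p ≤ 1 := by
  unfold gini giniF
  have h1 : 0 ≤ ∑ ℓ : Fin d, lorenzF (fun k : Fin d => p ((k : ℕ) : ZMod d)) ℓ := by
    apply Finset.sum_nonneg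
    intro ℓ _
    unfold lorenzF
    exact Finset.sum_nonneg fun k _ => hp _
  have h2 : 0 ≤ 2 / ((d : ℝ) + 1) := by positivity
  nlinarith

lemma PX_nonneg {d : ℕ} [NeZero d] {σ : Matrix (ZMod d) (ZMod d) ℂ} (h : σ.PosSemidef)
    (r : ZMod d) : 0 ≤ PX σ r := by
  have h2 := h.dotProduct_mulVec_nonneg (Pi.single r 1)
  have heq : star (Pi.single r 1 : ZMod d → ℂ) ⬝ᵥ σ *ᵥ (Pi.single r 1 : ZMod d → ℂ) = σ r r := by
    rw [Matrix.mulVec_single]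
    simp [dotProduct, Pi.single_apply, apply_ite (star : ℂ → ℂ), Finset.sum_ite_eq']
  rw [heq] at h2
  simpa [PX] using (Complex.le_def.mp h2).1

end AuxLemmas

/-- Let `s : ZMod d → ℂ` be the unit vector
`s r = ((if r = 0 then 1 else 0) + 1/√d) / √(2 + 2/√d)`, and let `ρ_s` be the rank-one
projection `(ρ_s) r s' = s r · conj(s s')`. Then `ρ_s` is a density matrix with
`G_X(ρ_s) = G_P(ρ_s) = ((d − 1)/(d + 1)) · (2 + √d)/(2 + 2√d)`, and hence
`G_XP(ρ_s) = ((d − 1)/(d + 1)) · (1 + 1/(1 + √d))`. In particular, the supremum of `G_XP`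
over all density matrices is at least `((d − 1)/(d + 1)) · (1 + 1/(1 + √d))`. -/

theorem GXP_example_state {d : ℕ} [NeZero d] (hd : 2 ≤ d)
    (s : ZMod d → ℂ)
    (hs : ∀ r : ZMod d,
      s r = ((((if r = 0 then 1 else 0) + 1 / Real.sqrt d) / Real.sqrt (2 + 2 / Real.sqrt d) : ℝ) : ℂ))
    (ρs : Matrix (ZMod d) (ZMod d) ℂ)
    (hρs : ∀ r s' : ZMod d, ρs r s' = s r * (starRingEnd ℂ) (s s')) :
    IsDensityMatrix ρs ∧
    GX ρs = (((d : ℝ) - 1) / ((d : ℝ) + 1)) * ((2 + Real.sqrt d) / (2 + 2 * Real.sqrt d)) ∧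
    GP ρs = (((d : ℝ) - 1) / ((d : ℝ) + 1)) * ((2 + Real.sqrt d) / (2 + 2 * Real.sqrt d)) ∧
    GXP ρs = (((d : ℝ) - 1) / ((d : ℝ) + 1)) * (1 + 1 / (1 + Real.sqrt d)) ∧
    (((d : ℝ) - 1) / ((d : ℝ) + 1)) * (1 + 1 / (1 + Real.sqrt d)) ≤
      sSup {x : ℝ | ∃ σ : Matrix (ZMod d) (ZMod d) ℂ, IsDensityMatrix σ ∧ GXP σ = x} := by
  set c := Real.sqrt d with hcdef
  have hd0 : (0 : ℝ) < d := by
    have : 0 < d := by omega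
    exact_mod_cast this
  have hc : 0 < c := Real.sqrt_pos.mpr hd0
  have hc2 : c ^ 2 = d := Real.sq_sqrt hd0.le
  have hN : (0 : ℝ) < 2 + 2 / c := by positivity
  set M := Real.sqrt (2 + 2 / c) with hMdef
  have hM : 0 < M := Real.sqrt_pos.mpr hN
  have hM2 : M ^ 2 = 2 + 2 / c := Real.sq_sqrt hN.le
  set a := (1 + 1 / c) ^ 2 / (2 + 2 / c) with hadef
  set b := (1 / c) ^ 2 / (2 + 2 / c) with hbdef
  have hba : b < a := by
    rw [hadef, hbdef, div_lt_div_iff_of_pos_right hN]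
    nlinarith [one_div_pos.mpr hc]
  have hnorm : a + ((d : ℝ) - 1) * b = 1 := by
    rw [hadef, hbdef, ← hc2]; field_simp; ring
  -- diagonal values
  have hxval : ∀ r : ZMod d,
      ((if r = 0 then (1 : ℝ) else 0) + 1 / c) / M * (((if r = 0 then (1 : ℝ) else 0) + 1 / c) / M)
        = if r = 0 then a else b := by
    intro r
    by_cases hr : r = 0
    · rw [if_pos hr, if_pos hr, div_mul_div_comm, ← pow_two, ← pow_two, hM2, hadef]
    · rw [if_neg hr, if_neg hr, zero_add, div_mul_div_comm, ← pow_two, ← pow_two, hM2, hbdef]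
  have hdiag : ∀ r : ZMod d, ρs r r = ((if r = 0 then a else b : ℝ) : ℂ) := by
    intro r
    rw [hρs, hs, Complex.conj_ofReal, ← Complex.ofReal_mul]
    exact congrArg _ (hxval r)
  have hreal : ∀ r, (starRingEnd ℂ) (s r) = s r := fun r => by
    rw [hs]; exact Complex.conj_ofReal _
  -- trace
  have htrace : ρs.trace = 1 := by
    have hsumR : ∑ r : ZMod d, (if r = 0 then a else b) = a + ((d : ℝ) - 1) * b := by
      have hstep : ∀ r : ZMod d, (if r = 0 then a else b) = b + (if r = 0 then a - b else 0) := by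
        intro r; by_cases hr : r = 0 <;> simp [hr]
      rw [Finset.sum_congr rfl fun r _ => hstep r, Finset.sum_add_distrib, Finset.sum_const,
        Finset.sum_ite_eq' Finset.univ (0 : ZMod d), Finset.card_univ, ZMod.card, nsmul_eq_mul]
      simp only [Finset.mem_univ, if_pos]
      ring
    rw [Matrix.trace]
    simp only [Matrix.diag]
    rw [Finset.sum_congr rfl fun r _ => hdiag r, ← Complex.ofReal_sum, hsumR, hnorm,
      Complex.ofReal_one]
  -- positive semidefinite
  have hpsd : ρs.PosSemidef := by
    refine posSemidef_iff_dotProduct_mulVec.mpr ⟨?_, ?_⟩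
    · ext i j
      rw [Matrix.conjTranspose_apply, hρs j i, hρs i j]
      simp only [star_mul', Complex.star_def, Complex.conj_conj]
      ring
    · intro y
      have hrewrite : star y ⬝ᵥ ρs *ᵥ y
          = star (∑ j, (starRingEnd ℂ) (s j) * y j) * (∑ j, (starRingEnd ℂ) (s j) * y j) := by
        have h1 : star y ⬝ᵥ ρs *ᵥ y
            = ∑ i, (star (y i) * s i) * ∑ j, (starRingEnd ℂ) (s j) * y j := by
          simp only [dotProduct, Matrix.mulVec, hρs]
          apply Finset.sum_congr rfl
          intro i _
          rw [Finset.mul_sum, Finset.mul_sum]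
          apply Finset.sum_congr rfl
          intro j _
          simp only [Pi.star_apply]
          ring
        rw [h1, ← Finset.sum_mul]
        congr 1
        rw [star_sum]
        apply Finset.sum_congr rfl
        intro j _
        rw [star_mul', show star ((starRingEnd ℂ) (s j)) = s j from star_star (s j)]
        ring
      rw [hrewrite]
      exact star_mul_self_nonneg _
  -- Fourier fixed point
  have hcC : ((c : ℝ) : ℂ) ≠ 0 := Complex.ofReal_ne_zero.mpr hc.ne'
  have hMC : ((M : ℝ) : ℂ) ≠ 0 := Complex.ofReal_ne_zero.mpr hM.ne'
  have hdc : ((d : ℕ) : ℂ) = ((c : ℝ) : ℂ) ^ 2 := by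
    rw [← Complex.ofReal_pow, hc2, Complex.ofReal_natCast]
  have hw : ∀ j : ZMod d, ∑ u : ZMod d, s u * Fmat d u j = s j := by
    intro j
    have hterm : ∀ u : ZMod d, s u * Fmat d u j
        = (1 / (((M : ℝ) : ℂ) * ((c : ℝ) : ℂ))) * ((if u = 0 then (1 : ℂ) else 0) * omega d ^ (u * j).val)
          + (1 / (((M : ℝ) : ℂ) * ((c : ℝ) : ℂ))) * ((1 / ((c : ℝ) : ℂ)) * omega d ^ (u * j).val) := by
      intro u
      rw [hs u, Fmat, Matrix.of_apply, ← hcdef]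
      push_cast [apply_ite ((↑·) : ℝ → ℂ)]
      by_cases hu : u = 0
      · simp only [hu, if_pos]
        field_simp
        try ring
        try tauto
      · simp only [hu, if_neg, not_false_iff]
        field_simp
        try ring
        try tauto
    rw [Finset.sum_congr rfl fun u _ => hterm u, Finset.sum_add_distrib,
      ← Finset.mul_sum, ← Finset.mul_sum, ← Finset.mul_sum]
    have hA : ∑ u : ZMod d, (if u = 0 then (1 : ℂ) else 0) * omega d ^ (u * j).val = 1 := by
      rw [Finset.sum_congr rfl fun u _ => by rw [ite_mul, one_mul, zero_mul],
        Finset.sum_ite_eq' Finset.univ (0 : ZMod d)]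
      simp [ZMod.val_zero]
    have hB : ∑ u : ZMod d, omega d ^ (u * j).val = if j = 0 then ((d : ℕ) : ℂ) else 0 := by
      rw [Finset.sum_congr rfl fun u _ => by rw [mul_comm]]
      exact sum_omega j
    rw [hA, hB, hs j]
    by_cases hj : j = 0
    · rw [if_pos hj, if_pos hj, hdc]
      push_cast
      field_simp
      ring
    · rw [if_neg hj, if_neg hj]
      push_cast
      field_simp
      ring
  have hFix : (Fmat d)ᴴ * ρs * Fmat d = ρs := by
    have hv : ∀ i : ZMod d, ∑ t : ZMod d, (starRingEnd ℂ) (Fmat d t i) * s t = s i := by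
      intro i
      have : ∑ t : ZMod d, (starRingEnd ℂ) (Fmat d t i) * s t
          = (starRingEnd ℂ) (∑ t : ZMod d, s t * Fmat d t i) := by
        rw [map_sum]
        apply Finset.sum_congr rfl
        intro t _
        rw [_root_.map_mul, hreal, mul_comm]
      rw [this, hw i, hreal]
    ext i j
    simp only [Matrix.mul_apply, Matrix.conjTranspose_apply, hρs, Complex.star_def]
    have h1 : ∀ u : ZMod d,
        (∑ t : ZMod d, (starRingEnd ℂ) (Fmat d t i) * (s t * (starRingEnd ℂ) (s u)))
          = s i * (starRingEnd ℂ) (s u) := by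
      intro u
      have : (∑ t : ZMod d, (starRingEnd ℂ) (Fmat d t i) * (s t * (starRingEnd ℂ) (s u)))
          = (∑ t : ZMod d, (starRingEnd ℂ) (Fmat d t i) * s t) * (starRingEnd ℂ) (s u) := by
        rw [Finset.sum_mul]
        apply Finset.sum_congr rfl
        intro t _
        ring
      rw [this, hv i]
    rw [Finset.sum_congr rfl fun u _ => by rw [h1 u]]
    have h2 : ∑ u : ZMod d, s i * (starRingEnd ℂ) (s u) * Fmat d u j
        = s i * ∑ u : ZMod d, s u * Fmat d u j := by
      rw [Finset.mul_sum]
      apply Finset.sum_congr rfl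
      intro u _
      rw [hreal]
      ring
    rw [h2, hw j, hreal j]
  -- distributions
  have hPXfun : PX ρs = fun r => if r = 0 then a else b := by
    funext r
    show (ρs r r).re = _
    rw [hdiag r]
    exact Complex.ofReal_re _
  have hPPfun : PP ρs = PX ρs := by
    funext r
    show (((Fmat d)ᴴ * ρs * Fmat d) r r).re = (ρs r r).re
    rw [hFix]
  -- Gini values
  have hfin : (fun k : Fin d => (fun r : ZMod d => if r = 0 then a else b) (((k : ℕ)) : ZMod d))
      = fun k : Fin d => if k = 0 then a else b := by
    funext k
    simp only []
    by_cases hk : k = 0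
    · simp [hk]
    · have h1 : (((k : ℕ)) : ZMod d) ≠ 0 := by
        intro h
        rw [ZMod.natCast_eq_zero_iff] at h
        exact hk (Fin.ext (Nat.eq_zero_of_dvd_of_lt h k.isLt))
      rw [if_neg h1, if_neg hk]
  have hGXval : GX ρs = ((d : ℝ) - 1) / ((d : ℝ) + 1) * (1 - b * d) := by
    rw [GX, hPXfun, gini, hfin]
    exact giniF_two hd hba hnorm
  have hbd : 1 - b * d = (2 + c) / (2 + 2 * c) := by
    rw [hbdef, ← hc2]
    field_simp
    ring
  have hGX2 : GX ρs = ((d : ℝ) - 1) / ((d : ℝ) + 1) * ((2 + c) / (2 + 2 * c)) := by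
    rw [hGXval, hbd]
  have hGP2 : GP ρs = ((d : ℝ) - 1) / ((d : ℝ) + 1) * ((2 + c) / (2 + 2 * c)) := by
    rw [GP, hPPfun, ← GX, hGX2]
  have hGXP2 : GXP ρs = ((d : ℝ) - 1) / ((d : ℝ) + 1) * (1 + 1 / (1 + c)) := by
    rw [GXP, hGX2, hGP2, ← mul_add]
    congr 1
    have h1c : (1 : ℝ) + c ≠ 0 := by positivity
    have h2c : (2 : ℝ) + 2 * c ≠ 0 := by positivity
    field_simp
    ring
  refine ⟨⟨hpsd, htrace⟩, hGX2, hGP2, hGXP2, ?_⟩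
  rw [← hGXP2]
  apply le_csSup
  · refine ⟨2, ?_⟩
    rintro x ⟨σm, hσm, rfl⟩
    have hx : gini (PX σm) ≤ 1 := gini_le_one fun r => PX_nonneg hσm.1 r
    have hp : gini (PP σm) ≤ 1 := by
      have hps : ((Fmat d)ᴴ * σm * Fmat d).PosSemidef :=
        hσm.1.conjTranspose_mul_mul_same (Fmat d)
      exact gini_le_one fun r => PX_nonneg hps r
    have : GXP σm = gini (PX σm) + gini (PP σm) := rfl
    rw [this]
    linarith
  · exact ⟨ρs, ⟨hpsd, htrace⟩, rfl⟩
end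

section
/- For any probability vector λ on ZMod d, let ρ be the diagonal matrix with diagonal entries λ r (a mixture of position projectors). Then ρ is a density matrix, G_P(ρ) = 0, and G_XP(ρ) ≤ (d − 1)/(d + 1). -/
open Matrix
open scoped ComplexOrder

noncomputable section Aux

-- Gauss sum
lemma aux_gauss (n : ℕ) : ∑ k ∈ Finset.range n, ((k : ℝ) + 1) = n * (n + 1) / 2 := by
  induction n with
  | zero => simp
  | succ m ih => rw [Finset.sum_range_succ, ih]; push_cast; ring

-- sum over Fin d via natCast equals sum over ZMod d
lemma aux_sum_fin {d : ℕ} [NeZero d] (f : ZMod d → ℝ) :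
    ∑ k : Fin d, f ((k : ℕ) : ZMod d) = ∑ r, f r := by
  apply Fintype.sum_bijective (fun k : Fin d => ((k : ℕ) : ZMod d))
  · rw [Fintype.bijective_iff_surjective_and_card]
    refine ⟨fun r => ⟨⟨r.val, r.val_lt⟩, ZMod.natCast_rightInverse r⟩, by simp [ZMod.card]⟩
  · intro k; rfl

-- |F entry|² fact
lemma aux_F_entry {d : ℕ} [NeZero d] (t r : ZMod d) :
    star (Fmat d t r) * (Fmat d t r) = 1 / (d : ℂ) := by
  have hd : (0:ℝ) < d := Nat.cast_pos.mpr (Nat.pos_of_ne_zero (NeZero.ne d))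
  rw [Complex.star_def, ← Complex.normSq_eq_conj_mul_self]
  have habs : ‖Fmat d t r‖ = 1 / Real.sqrt d := by
    simp only [Fmat, Matrix.of_apply, map_div₀, map_pow, norm_div, norm_pow, Complex.norm_real, Real.norm_eq_abs,
      abs_of_pos (Real.sqrt_pos.mpr hd)]
    have : ‖omega d‖ = 1 := by
      rw [omega, Complex.norm_exp]
      have : (2 * (Real.pi:ℂ) * Complex.I / (d:ℂ)).re = 0 := by
        have : 2 * (Real.pi:ℂ) * Complex.I / (d:ℂ) = ((2 * Real.pi / d : ℝ) : ℂ) * Complex.I := by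
          push_cast; ring
        rw [this]; simp
      rw [this, Real.exp_zero]
    rw [this, one_pow]
  have : Complex.normSq (Fmat d t r) = 1 / d := by
    rw [← Complex.sq_norm, habs]
    rw [div_pow, one_pow, Real.sq_sqrt hd.le]
  rw [this]; push_cast; ring

lemma aux_gini_le {d : ℕ} [NeZero d] (p : ZMod d → ℝ) (h0 : ∀ r, 0 ≤ p r)
    (h1 : ∑ r, p r = 1) : gini p ≤ ((d:ℝ) - 1) / ((d:ℝ) + 1) := by
  have hd : (0:ℝ) < d := Nat.cast_pos.mpr (Nat.pos_of_ne_zero (NeZero.ne d))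
  set q : Fin d → ℝ := fun k => p ((k : ℕ) : ZMod d) with hq
  have hq0 : ∀ k, 0 ≤ q k := fun k => h0 _
  have hqsum : ∑ k, q k = 1 := by rw [hq]; rw [aux_sum_fin p]; exact h1
  have hdn : d ≠ 0 := NeZero.ne d
  have hL : Fin d := ⟨d - 1, by omega⟩
  have hlast : ∀ k : Fin d, k ≤ (⟨d - 1, by omega⟩ : Fin d) := by
    intro k; exact Fin.mk_le_mk.mpr (by omega)
  have hIic : Finset.Iic (⟨d - 1, by omega⟩ : Fin d) = Finset.univ := by
    ext k; simp [hlast k]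
  have hlorlast : lorenzF q ⟨d - 1, by omega⟩ = 1 := by
    rw [lorenzF, hIic, Equiv.sum_comp (Tuple.sort q) q, hqsum]
  have hlor0 : ∀ ℓ : Fin d, 0 ≤ lorenzF q ℓ := by
    intro ℓ; exact Finset.sum_nonneg fun k _ => hq0 _
  have hS : (1:ℝ) ≤ ∑ ℓ : Fin d, lorenzF q ℓ := by
    rw [← hlorlast]
    exact Finset.single_le_sum (fun i _ => hlor0 i) (Finset.mem_univ _)
  have hpos : (0:ℝ) < 2 / ((d:ℝ) + 1) := by positivity
  have : gini p = 1 - (2 / ((d:ℝ) + 1)) * ∑ ℓ : Fin d, lorenzF q ℓ := rfl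
  rw [this]
  have h2 : (2 / ((d:ℝ) + 1)) * 1 ≤ (2 / ((d:ℝ) + 1)) * ∑ ℓ : Fin d, lorenzF q ℓ :=
    mul_le_mul_of_nonneg_left hS hpos.le
  have : ((d:ℝ) - 1) / ((d:ℝ) + 1) = 1 - 2 / ((d:ℝ) + 1) := by
    field_simp
    ring
  rw [this]; linarith

lemma aux_gini_const {d : ℕ} [NeZero d] : gini (fun _ : ZMod d => 1 / (d:ℝ)) = 0 := by
  have hd : (0:ℝ) < d := Nat.cast_pos.mpr (Nat.pos_of_ne_zero (NeZero.ne d))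
  have hlor : ∀ ℓ : Fin d, lorenzF (fun _ : Fin d => 1 / (d:ℝ)) ℓ = ((ℓ:ℝ) + 1) / d := by
    intro ℓ
    rw [lorenzF, Finset.sum_const, Fin.card_Iic]
    ring
  have hsum : ∑ ℓ : Fin d, lorenzF (fun _ : Fin d => 1 / (d:ℝ)) ℓ = ((d:ℝ) + 1) / 2 := by
    simp only [hlor]
    rw [← Finset.sum_div, Fin.sum_univ_eq_sum_range (fun k => ((k:ℝ) + 1)), aux_gauss]
    field_simp
  show giniF _ = 0
  rw [giniF]
  have : (fun k : Fin d => (1:ℝ) / d) = fun _ : Fin d => 1 / (d:ℝ) := rfl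
  rw [hsum]
  field_simp
  norm_num

end Aux

/-- For any probability vector `λ` on `ZMod d`, let `ρ` be the diagonal matrix
with diagonal entries `λ r` (a mixture of position projectors). Then `ρ` is a density matrix,
`G_P(ρ) = 0`, and `G_XP(ρ) ≤ (d − 1)/(d + 1)`. -/
theorem GXP_mixture_of_position_states {d : ℕ} [NeZero d] (hd : 2 ≤ d)
    (lam : ZMod d → ℝ) (hlam_nonneg : ∀ r, 0 ≤ lam r) (hlam_sum : ∑ r, lam r = 1) :
    IsDensityMatrix (Matrix.diagonal fun r => (lam r : ℂ)) ∧
    GP (Matrix.diagonal fun r => (lam r : ℂ)) = 0 ∧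
    GXP (Matrix.diagonal fun r => (lam r : ℂ)) ≤ ((d : ℝ) - 1) / ((d : ℝ) + 1) := by
  set ρ : Matrix (ZMod d) (ZMod d) ℂ := Matrix.diagonal fun r => (lam r : ℂ) with hρ
  have hdens : IsDensityMatrix ρ := by
    constructor
    · rw [hρ, Matrix.posSemidef_diagonal_iff]
      intro i
      exact_mod_cast Complex.zero_le_real.mpr (hlam_nonneg i)
    · rw [hρ, Matrix.trace_diagonal]
      push_cast
      exact_mod_cast congrArg (Complex.ofReal) hlam_sum
  have hPP : PP ρ = fun _ : ZMod d => 1 / (d : ℝ) := by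
    funext r
    have key : ((Fmat d)ᴴ * ρ * Fmat d) r r = ((1 / (d : ℝ) : ℝ) : ℂ) := by
      rw [Matrix.mul_apply]
      have h1 : ∀ t, ((Fmat d)ᴴ * ρ) r t = star (Fmat d t r) * (lam t : ℂ) := by
        intro t
        rw [hρ, Matrix.mul_diagonal, Matrix.conjTranspose_apply]
      have h2 : ∀ t : ZMod d,
          ((Fmat d)ᴴ * ρ) r t * Fmat d t r = (lam t : ℂ) * (1 / (d : ℂ)) := by
        intro t
        rw [h1 t, mul_right_comm, aux_F_entry]; ring
      simp only [h2]
      rw [← Finset.sum_mul]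
      have : ∑ t : ZMod d, ((lam t : ℂ)) = 1 := by
        push_cast
        exact_mod_cast congrArg (Complex.ofReal) hlam_sum
      rw [this, one_mul]
      push_cast
      ring
    rw [PP, key, Complex.ofReal_re]
  have hPX : PX ρ = lam := by
    funext r
    rw [PX, hρ, Matrix.diagonal_apply_eq, Complex.ofReal_re]
  have hGP : GP ρ = 0 := by
    rw [GP, hPP, aux_gini_const]
  refine ⟨hdens, hGP, ?_⟩
  rw [GXP, hGP, add_zero, GX, hPX]
  exact aux_gini_le lam hlam_nonneg hlam_sum
end
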